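/- arXiv:1705.01407 — 2 statements merged into one kernel-verified Lean document; each statement's English description precedes it below -/
import Mathlib

section
/- Let Q be a real symmetric positive semidefinite n×n matrix all of whose eigenvalues λ_1, …, λ_n lie in [0,1), so that A := (I − Q)⁻¹ is well defined and positive definite. If z is a random vector with law N_n(0, A), the multivariate Gaussian on ℝ^n with mean 0 and covariance matrix A, then the law of the quadratic form zᵀ Q z equals the pushforward of the standard Gaussian measure on ℝ^n under x ↦ ∑_{j=1}^n (λ_j/(1−λ_j)) x_j²; that is, zᵀ Q z is distributed as a weighted sum of n independent χ²_1 random variables with weights λ_j/(1−λ_j). -/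
open MeasureTheory Matrix ProbabilityTheory
open scoped ENNReal NNReal MatrixOrder

/-- The standard Gaussian measure on `ℝ^n`, i.e. the product of `n` copies of `N(0,1)`. -/
noncomputable def stdGaussian (n : ℕ) : Measure (Fin n → ℝ) :=
  Measure.pi fun _ => gaussianReal 0 1

/-- The square root of a positive semidefinite matrix, as defined in the older Mathlib
(`Matrix.PosSemidef.sqrt`, since removed). -/
noncomputable def Matrix.PosSemidef.sqrt {n : Type*} [Fintype n] [DecidableEq n]
    {A : Matrix n n ℝ} (hA : A.PosSemidef) : Matrix n n ℝ :=
  hA.1.eigenvectorUnitary.1 * diagonal ((↑) ∘ (√·) ∘ hA.1.eigenvalues) *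
  (star hA.1.eigenvectorUnitary : Matrix n n ℝ)

/-- The multivariate Gaussian measure `N_d(m, S)` on `ℝ^d` with mean `m` and positive
semidefinite covariance matrix `S`: the law of `m + S^{1/2} Z` with `Z` standard Gaussian. -/
noncomputable def mvGaussian {d : ℕ} (m : Fin d → ℝ) (S : Matrix (Fin d) (Fin d) ℝ)
    (hS : S.PosSemidef) : Measure (Fin d → ℝ) :=
  Measure.map (fun x => m + hS.sqrt *ᵥ x) (stdGaussian d)

theorem lintegral_fin_prod {n : ℕ} (f : Fin n → ℝ → ℝ≥0∞) (hf : ∀ i, Measurable (f i)) :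
    ∫⁻ x : Fin n → ℝ, ∏ i, f i (x i) = ∏ i, ∫⁻ t, f i t := by
  induction n with
  | zero => simp [volume_pi]
  | succ n ih =>
    have hmp := ((measurePreserving_piFinSuccAbove (fun _ : Fin (n+1) => (volume : Measure ℝ)) 0).symm)
    rw [volume_pi, ← hmp.lintegral_comp_emb (MeasurableEquiv.measurableEmbedding _)]
    simp_rw [MeasurableEquiv.piFinSuccAbove_symm_apply, Fin.insertNthEquiv,
      Fin.prod_univ_succ, Fin.insertNth_zero]
    simp only [Fin.zero_succAbove, Function.comp_def, Fin.cons_zero, Fin.cons_succ,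
      Equiv.coe_fn_mk, cast_eq]
    rw [lintegral_prod_mul (f := f 0) (g := fun y : Fin n → ℝ => ∏ i, f i.succ (y i))
      (hf 0).aemeasurable
      (Finset.measurable_prod _ fun (i : Fin n) _ => (hf i.succ).comp (measurable_pi_apply i)).aemeasurable]
    rw [show (Measure.pi fun _ : Fin n => (volume : Measure ℝ)) = volume from volume_pi.symm,
      ih (fun i => f i.succ) (fun i => hf i.succ)]


theorem stdGaussian_eq_withDensity (n : ℕ) :
    stdGaussian n = (volume : Measure (Fin n → ℝ)).withDensity
      (fun x => ∏ i, gaussianPDF 0 1 (x i)) := by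
  refine Measure.pi_eq fun s hs => ?_
  rw [withDensity_apply _ (MeasurableSet.univ_pi hs)]
  have : ∫⁻ x in Set.univ.pi s, ∏ i, gaussianPDF 0 1 (x i)
      = ∫⁻ x : Fin n → ℝ, ∏ i, (s i).indicator (gaussianPDF 0 1) (x i) := by
    rw [← lintegral_indicator (MeasurableSet.univ_pi hs)]
    congr 1
    funext x
    by_cases hx : x ∈ Set.univ.pi s
    · rw [Set.indicator_of_mem hx]
      exact (Finset.prod_congr rfl fun i _ =>
        (Set.indicator_of_mem (hx i (Set.mem_univ i)) _).symm)
    · rw [Set.indicator_of_notMem hx]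
      rw [Set.mem_univ_pi, not_forall] at hx
      obtain ⟨i, hi⟩ := hx
      exact (Finset.prod_eq_zero (Finset.mem_univ i)
        (Set.indicator_of_notMem hi _)).symm
  rw [this, lintegral_fin_prod _ (fun i => (measurable_gaussianPDF 0 1).indicator (hs i))]
  refine Finset.prod_congr rfl fun i _ => ?_
  rw [lintegral_indicator (hs i), gaussianReal_of_var_ne_zero 0 one_ne_zero,
    withDensity_apply _ (hs i)]

theorem map_equiv_withDensity {α β : Type*} [MeasurableSpace α] [MeasurableSpace β]
    (e : α ≃ᵐ β) (μ : Measure α) (f : β → ℝ≥0∞) (hf : Measurable f) :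
    Measure.map e (μ.withDensity (f ∘ e)) = (Measure.map e μ).withDensity f := by
  ext s hs
  rw [Measure.map_apply e.measurable hs, withDensity_apply _ hs,
    withDensity_apply _ (e.measurable hs), setLIntegral_map hs hf e.measurable]
  rfl

theorem dot_mulVec_mulVec {n : ℕ} {M : Matrix (Fin n) (Fin n) ℝ} (h : Mᵀ * M = 1)
    (a b : Fin n → ℝ) : (M *ᵥ a) ⬝ᵥ (M *ᵥ b) = a ⬝ᵥ b := by
  rw [dotProduct_mulVec, vecMul_mulVec, h, vecMul_one]

theorem measurable_mulVec {n : ℕ} (M : Matrix (Fin n) (Fin n) ℝ) :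
    Measurable (fun x : Fin n → ℝ => M *ᵥ x) := by
  refine measurable_pi_lambda _ fun i => ?_
  simp only [Matrix.mulVec, dotProduct]
  exact Finset.measurable_sum _ fun j _ => (measurable_pi_apply j).const_mul _

/-- A matrix with orthonormal columns and rows induces a measurable equiv. -/
noncomputable def mulVecEquiv {n : ℕ} (M : Matrix (Fin n) (Fin n) ℝ)
    (h1 : Mᵀ * M = 1) (h2 : M * Mᵀ = 1) : (Fin n → ℝ) ≃ᵐ (Fin n → ℝ) where
  toFun := fun x => M *ᵥ x
  invFun := fun x => Mᵀ *ᵥ x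
  left_inv := fun x => by simp only []; rw [mulVec_mulVec, h1, one_mulVec]
  right_inv := fun x => by simp only []; rw [mulVec_mulVec, h2, one_mulVec]
  measurable_toFun := measurable_mulVec M
  measurable_invFun := measurable_mulVec Mᵀ

theorem map_mulVec_volume {n : ℕ} (M : Matrix (Fin n) (Fin n) ℝ)
    (h1 : Mᵀ * M = 1) :
    Measure.map (fun x : Fin n → ℝ => M *ᵥ x) volume = volume := by
  have hdet : M.det * M.det = 1 := by
    have := congrArg Matrix.det h1
    rwa [Matrix.det_mul, Matrix.det_transpose, Matrix.det_one] at this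
  have hdet1 : |M.det| = 1 := by
    have h : M.det ^ 2 = 1 := by rw [sq]; exact hdet
    rcases sq_eq_one_iff.mp h with h | h <;> rw [h] <;> norm_num
  have heq : (fun x : Fin n → ℝ => M *ᵥ x) = ⇑(Matrix.toLin' M) := by
    funext x; rw [Matrix.toLin'_apply]
  have hd0 : M.det ≠ 0 := by
    intro h0; rw [h0] at hdet1; simp at hdet1
  rw [heq, Real.map_matrix_volume_pi_eq_smul_volume_pi hd0, abs_inv, hdet1]
  norm_num


theorem prod_gaussianPDFReal {n : ℕ} (y : Fin n → ℝ) :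
    ∏ i, gaussianPDFReal 0 1 (y i) =
      ((Real.sqrt (2 * Real.pi))⁻¹) ^ n * Real.exp (-(∑ i, (y i) ^ 2) / 2) := by
  simp only [gaussianPDFReal, NNReal.coe_one, mul_one, sub_zero, zero_sub, neg_neg]
  rw [Finset.prod_mul_distrib, Finset.prod_const, ← Real.exp_sum]
  congr 1
  · simp
  · congr 1
    rw [← Finset.sum_div, Finset.sum_neg_distrib, neg_div]

theorem map_mulVec_stdGaussian {n : ℕ} (M : Matrix (Fin n) (Fin n) ℝ)
    (h1 : Mᵀ * M = 1) (h2 : M * Mᵀ = 1) :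
    Measure.map (fun x : Fin n → ℝ => M *ᵥ x) (stdGaussian n) = stdGaussian n := by
  set G : (Fin n → ℝ) → ℝ≥0∞ := fun x => ∏ i, gaussianPDF 0 1 (x i) with hGdef
  have hG : Measurable G :=
    Finset.measurable_prod _ fun i _ =>
      (measurable_gaussianPDF 0 1).comp (measurable_pi_apply i)
  have hprod : ∀ y : Fin n → ℝ, G y = ENNReal.ofReal (∏ i, gaussianPDFReal 0 1 (y i)) := by
    intro y
    rw [ENNReal.ofReal_prod_of_nonneg fun i _ => gaussianPDFReal_nonneg 0 1 (y i)]
    rfl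
  have hGe : G ∘ (fun x : Fin n → ℝ => M *ᵥ x) = G := by
    funext x
    simp only [Function.comp_apply, hprod, prod_gaussianPDFReal]
    have hdot : ∑ i, ((M *ᵥ x) i) ^ 2 = ∑ i, (x i) ^ 2 := by
      have h := dot_mulVec_mulVec h1 x x
      simpa [dotProduct, pow_two] using h
    rw [hdot]
  let e := mulVecEquiv M h1 h2
  have hcoe : ⇑e = fun x : Fin n → ℝ => M *ᵥ x := rfl
  rw [stdGaussian_eq_withDensity, ← hcoe]
  calc Measure.map e (volume.withDensity G)
      = Measure.map e (volume.withDensity (G ∘ e)) := by rw [hcoe, hGe]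
    _ = (Measure.map e volume).withDensity G := map_equiv_withDensity e volume G hG
    _ = volume.withDensity G := by rw [hcoe, map_mulVec_volume M h1]

theorem conj_diag_mul {n : ℕ} (U : Matrix (Fin n) (Fin n) ℝ) (hU : Uᵀ * U = 1)
    (d e : Fin n → ℝ) :
    (U * diagonal d * Uᵀ) * (U * diagonal e * Uᵀ) = U * diagonal (fun i => d i * e i) * Uᵀ := by
  have h : Uᵀ * (U * diagonal e * Uᵀ) = diagonal e * Uᵀ := by
    rw [← Matrix.mul_assoc, ← Matrix.mul_assoc, hU, Matrix.one_mul]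
  rw [Matrix.mul_assoc (U * diagonal d) Uᵀ _, h, ← Matrix.mul_assoc,
    Matrix.mul_assoc U, diagonal_mul_diagonal]

theorem posDef_conj {n : ℕ} {D : Matrix (Fin n) (Fin n) ℝ} (hD : D.PosDef)
    (U : Matrix (Fin n) (Fin n) ℝ) (hU1 : Uᵀ * U = 1) (hU2 : U * Uᵀ = 1) :
    (U * D * Uᵀ).PosDef := by
  have hstar : Uᴴ = Uᵀ := conjTranspose_eq_transpose_of_trivial U
  constructor
  · have := (hD.posSemidef.mul_mul_conjTranspose_same U).1
    rwa [hstar] at this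
  · have hinj : Function.Injective U.vecMul := fun a b h => by
      have := congrArg (fun v => v ᵥ* Uᵀ) h
      simpa [vecMul_vecMul, hU2] using this
    have := (hD.mul_mul_conjTranspose_same hinj).2
    rwa [hstar] at this


/-- Let `Q` be symmetric positive semidefinite with all eigenvalues in `[0,1)`.
Then `A := (I − Q)⁻¹` is well defined and positive definite, and if `z ~ N_n(0, A)` then the
law of `zᵀ Q z` is the pushforward of the standard Gaussian measure under
`x ↦ ∑ j, (λ_j / (1 − λ_j)) x_j²`, i.e. a weighted sum of independent `χ²₁` variables with
weights `λ_j / (1 − λ_j)`. -/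
theorem stmt_4 (n : ℕ) (Q : Matrix (Fin n) (Fin n) ℝ) (hQ : Q.PosSemidef)
    (hev : ∀ j, hQ.isHermitian.eigenvalues j ∈ Set.Ico (0 : ℝ) 1) :
    ((1 - Q)⁻¹).PosDef ∧
      ∀ hA : ((1 - Q)⁻¹).PosSemidef,
        Measure.map (fun z : Fin n → ℝ => z ⬝ᵥ Q *ᵥ z) (mvGaussian 0 ((1 - Q)⁻¹) hA) =
          Measure.map (fun x : Fin n → ℝ =>
            ∑ j, (hQ.isHermitian.eigenvalues j / (1 - hQ.isHermitian.eigenvalues j)) *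
              (x j) ^ 2) (stdGaussian n) := by
  classical
  set ev : Fin n → ℝ := hQ.isHermitian.eigenvalues with hev_def
  set U : Matrix (Fin n) (Fin n) ℝ := (hQ.isHermitian.eigenvectorUnitary : Matrix (Fin n) (Fin n) ℝ) with hU_def
  have hstar : star U = Uᵀ := by
    rw [Matrix.star_eq_conjTranspose, conjTranspose_eq_transpose_of_trivial]
  have hU1 : Uᵀ * U = 1 := by
    have := (hQ.isHermitian.eigenvectorUnitary).2
    rw [Matrix.mem_unitaryGroup_iff'] at this
    rw [← hstar]; exact this
  have hU2 : U * Uᵀ = 1 := by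
    have := (hQ.isHermitian.eigenvectorUnitary).2
    rw [Matrix.mem_unitaryGroup_iff] at this
    rw [← hstar]; exact this
  have hspec : Q = U * diagonal ev * Uᵀ := by
    have h := hQ.isHermitian.spectral_theorem
    rw [Unitary.conjStarAlgAut_apply, Matrix.star_eq_conjTranspose, conjTranspose_eq_transpose_of_trivial] at h
    simpa using h
  have h1ev : ∀ i, 0 < 1 - ev i := fun i => by have := (hev i).2; linarith
  have hsub : (1 : Matrix (Fin n) (Fin n) ℝ) - Q = U * diagonal (fun i => 1 - ev i) * Uᵀ := by
    have hdg : diagonal (fun i => 1 - ev i) = 1 - diagonal ev := by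
      rw [← diagonal_one, diagonal_sub]
    rw [hdg, Matrix.mul_sub, Matrix.sub_mul, Matrix.mul_one, hU2, hspec]
  have hPD : ((1 : Matrix (Fin n) (Fin n) ℝ) - Q).PosDef := by
    rw [hsub]
    exact posDef_conj (Matrix.PosDef.diagonal h1ev) U hU1 hU2
  refine ⟨hPD.inv, fun hA => ?_⟩
  -- the square root of (1 - Q)⁻¹
  set e0 : Fin n → ℝ := fun i => Real.sqrt ((1 - ev i)⁻¹) with he0_def
  have he0sq : ∀ i, e0 i * e0 i = (1 - ev i)⁻¹ := fun i =>
    Real.mul_self_sqrt (inv_nonneg.mpr (h1ev i).le)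
  set S : Matrix (Fin n) (Fin n) ℝ := U * diagonal e0 * Uᵀ with hS_def
  have hSS : S * S = U * diagonal (fun i => (1 - ev i)⁻¹) * Uᵀ := by
    rw [hS_def, conj_diag_mul U hU1]
    congr 1
    · congr 1
      exact congrArg diagonal (funext fun i => he0sq i)
  have hAinv : (1 - Q)⁻¹ = S * S := by
    apply Matrix.inv_eq_left_inv
    rw [hSS, hsub, conj_diag_mul U hU1]
    have : (fun i => (1 - ev i)⁻¹ * (1 - ev i)) = fun _ => (1:ℝ) :=
      funext fun i => inv_mul_cancel₀ (h1ev i).ne'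
    rw [this, diagonal_one, Matrix.mul_one, hU2]
  have hS_psd : S.PosSemidef := by
    have h := (Matrix.posSemidef_diagonal_iff.mpr
      (fun i => Real.sqrt_nonneg ((1 - ev i)⁻¹) : ∀ i, 0 ≤ e0 i)).mul_mul_conjTranspose_same U
    rwa [conjTranspose_eq_transpose_of_trivial] at h
  have hsqrt : hA.sqrt = S := by
    have h1 : hA.sqrt = cfc Real.sqrt ((1 - Q)⁻¹) := by
      rw [hA.1.cfc_eq, IsHermitian.cfc, Unitary.conjStarAlgAut_apply]
      rfl
    rw [h1, ← cfcₙ_eq_cfc (hf0 := by simp), ← CFC.sqrt_eq_real_sqrt _ hA.nonneg,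
      CFC.sqrt_unique hAinv.symm hS_psd.nonneg]
  -- measurability facts
  have msv : ∀ M : Matrix (Fin n) (Fin n) ℝ, Measurable (fun x : Fin n → ℝ => M *ᵥ x) :=
    measurable_mulVec
  have mq : Measurable (fun z : Fin n → ℝ => z ⬝ᵥ Q *ᵥ z) := by
    apply Finset.measurable_sum
    intro i _
    exact (measurable_pi_apply i).mul ((measurable_pi_apply i).comp (msv Q))
  have mg : Measurable (fun y : Fin n → ℝ => ∑ j, (ev j / (1 - ev j)) * (y j) ^ 2) := by
    apply Finset.measurable_sum
    intro j _
    exact (((measurable_pi_apply j).pow_const 2).const_mul _)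
  -- rewrite the mvGaussian
  have hmv : mvGaussian 0 ((1 - Q)⁻¹) hA = Measure.map (fun x : Fin n → ℝ => S *ᵥ x) (stdGaussian n) := by
    rw [mvGaussian]
    congr 1
    funext x
    rw [hsqrt, zero_add]
  rw [hmv, Measure.map_map mq (msv S)]
  -- pointwise identification of the composed map
  have hcomp : (fun z : Fin n → ℝ => z ⬝ᵥ Q *ᵥ z) ∘ (fun x : Fin n → ℝ => S *ᵥ x)
      = (fun y : Fin n → ℝ => ∑ j, (ev j / (1 - ev j)) * (y j) ^ 2) ∘ (fun x : Fin n → ℝ => Uᵀ *ᵥ x) := by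
    funext x
    simp only [Function.comp_apply]
    have hQS : Q * S = U * diagonal (fun i => ev i * e0 i) * Uᵀ := by
      rw [hspec, hS_def, conj_diag_mul U hU1]
    calc (S *ᵥ x) ⬝ᵥ (Q *ᵥ (S *ᵥ x))
        = (S *ᵥ x) ⬝ᵥ ((Q * S) *ᵥ x) := by rw [mulVec_mulVec]
      _ = (U *ᵥ (diagonal e0 *ᵥ (Uᵀ *ᵥ x))) ⬝ᵥ (U *ᵥ (diagonal (fun i => ev i * e0 i) *ᵥ (Uᵀ *ᵥ x))) := by
          rw [hQS, hS_def]
          rw [← mulVec_mulVec, ← mulVec_mulVec, ← mulVec_mulVec, ← mulVec_mulVec]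
      _ = (diagonal e0 *ᵥ (Uᵀ *ᵥ x)) ⬝ᵥ (diagonal (fun i => ev i * e0 i) *ᵥ (Uᵀ *ᵥ x)) :=
          dot_mulVec_mulVec hU1 _ _
      _ = ∑ j, (ev j / (1 - ev j)) * ((Uᵀ *ᵥ x) j) ^ 2 := by
          simp only [dotProduct, mulVec_diagonal]
          refine Finset.sum_congr rfl fun j _ => ?_
          rw [div_eq_mul_inv, ← he0sq j]
          ring
  rw [hcomp, ← Measure.map_map mg (msv Uᵀ)]
  rw [map_mulVec_stdGaussian Uᵀ (by rwa [transpose_transpose]) (by rwa [transpose_transpose])]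
end

section
/- Consider the CAPM case (k = 1, so m = k+1 = 2 parameters). Let Z_1, Z_2 be coordinates of a random vector with the standard Gaussian law on ℝ², and for each t ∈ ℕ let λ_{1,t}, λ_{2,t} ∈ (0,1) and c_t ≥ 0 satisfy: λ_{j,t} → 1 for j = 1,2; (1−λ_{1,t})/(1−λ_{2,t}) → 1; and c_t² · √((1−λ_{1,t})(1−λ_{2,t})) → C for some constant C ∈ (0, ∞). Then the probability of type II error t_{2,t} := P( (λ_{1,t}/(1−λ_{1,t})) Z_1² + (λ_{2,t}/(1−λ_{2,t})) Z_2² ≤ c_t² ) converges to 1 − e^{−C/2} as t → ∞. -/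
open MeasureTheory ProbabilityTheory Filter

/-- The standard Gaussian measure on `ℝ²`, i.e. the product of two copies of `N(0,1)`. -/
noncomputable def stdGaussian2 : Measure (Fin 2 → ℝ) :=
  Measure.pi fun _ => gaussianReal 0 1

open Real
open scoped ENNReal NNReal

instance : IsProbabilityMeasure stdGaussian2 := by
  unfold stdGaussian2; infer_instance

lemma gaussian_prod_eq :
    (gaussianReal 0 1).prod (gaussianReal 0 1)
      = (volume : Measure (ℝ × ℝ)).withDensity
          (fun z => gaussianPDF 0 1 z.1 * gaussianPDF 0 1 z.2) := by
  rw [Measure.volume_eq_prod]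
  refine Measure.prod_eq fun s t hs ht => ?_
  rw [withDensity_apply _ (hs.prod ht), ← Measure.prod_restrict,
    lintegral_prod_mul (measurable_gaussianPDF 0 1).aemeasurable
      (measurable_gaussianPDF 0 1).aemeasurable,
    gaussianReal_apply 0 one_ne_zero s, gaussianReal_apply 0 one_ne_zero t]

lemma integral_rho (b : ℝ) :
    ∫ x in (0:ℝ)..b, x * Real.exp (-x ^ 2 / 2) = 1 - Real.exp (-b ^ 2 / 2) := by
  have hd : ∀ x ∈ Set.uIcc (0:ℝ) b,
      HasDerivAt (fun y => -Real.exp (-y ^ 2 / 2)) (x * Real.exp (-x ^ 2 / 2)) x := by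
    intro x _
    have h1 : HasDerivAt (fun y : ℝ => -y ^ 2 / 2) (-x) x := by
      have h := (hasDerivAt_pow 2 x).neg.div_const 2
      exact h.congr_deriv (by ring)
    have h2 := h1.exp
    exact h2.neg.congr_deriv (by ring)
  rw [intervalIntegral.integral_eq_sub_of_hasDerivAt hd
    (Continuous.intervalIntegrable (by fun_prop) _ _)]
  simp [Real.exp_zero]
  ring

lemma integral_disk (r : ℝ) (hr : 0 ≤ r) :
    ∫ p in {p : ℝ × ℝ | p.1 ^ 2 + p.2 ^ 2 ≤ r},
      gaussianPDFReal 0 1 p.1 * gaussianPDFReal 0 1 p.2 = 1 - Real.exp (-r / 2) := by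
  have hT : MeasurableSet {p : ℝ × ℝ | p.1 ^ 2 + p.2 ^ 2 ≤ r} :=
    measurableSet_le (by fun_prop) measurable_const
  rw [← integral_indicator hT, ← integral_comp_polarCoord_symm]
  have hpt : ∀ p ∈ polarCoord.target,
      p.1 • Set.indicator {p : ℝ × ℝ | p.1 ^ 2 + p.2 ^ 2 ≤ r}
        (fun p => gaussianPDFReal 0 1 p.1 * gaussianPDFReal 0 1 p.2) (polarCoord.symm p)
      = Set.indicator (Set.Ioc 0 (Real.sqrt r) ×ˢ Set.Ioo (-π) π)
          (fun p : ℝ × ℝ => (p.1 * ((2 * π)⁻¹ * Real.exp (-p.1 ^ 2 / 2))) * 1) p := by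
    rintro ⟨ρ, θ⟩ hp
    simp only [polarCoord_target, Set.mem_prod, Set.mem_Ioi, Set.mem_Ioo] at hp
    obtain ⟨hρ, hθ⟩ := hp
    have hsq : (ρ * Real.cos θ) ^ 2 + (ρ * Real.sin θ) ^ 2 = ρ ^ 2 := by
      have h := Real.sin_sq_add_cos_sq θ
      nlinarith [h]
    by_cases h : ρ ^ 2 ≤ r
    · rw [Set.indicator_of_mem, Set.indicator_of_mem]
      · have h2π : (0:ℝ) ≤ 2 * π := by positivity
        have hss : Real.sqrt (2 * π) * Real.sqrt (2 * π) = 2 * π := Real.mul_self_sqrt h2π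
        have hexp : Real.exp (-(ρ * Real.cos θ) ^ 2 / 2) * Real.exp (-(ρ * Real.sin θ) ^ 2 / 2)
            = Real.exp (-ρ ^ 2 / 2) := by
          rw [← Real.exp_add]
          congr 1
          linarith [hsq]
        simp only [polarCoord_symm_apply, gaussianPDFReal, NNReal.coe_one, mul_one, sub_zero,
          smul_eq_mul]
        rw [mul_mul_mul_comm, ← mul_inv, hss, hexp]
      · exact ⟨⟨hρ, (Real.le_sqrt hρ.le hr).mpr h⟩, hθ⟩
      · simp only [polarCoord_symm_apply, Set.mem_setOf_eq]
        rw [hsq]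
        exact h
    · have hnm1 : (ρ, θ) ∉ Set.Ioc 0 (Real.sqrt r) ×ˢ Set.Ioo (-π) π :=
        fun hmem => h ((Real.le_sqrt hρ.le hr).mp hmem.1.2)
      have hnm2 : polarCoord.symm (ρ, θ) ∉ {p : ℝ × ℝ | p.1 ^ 2 + p.2 ^ 2 ≤ r} := by
        simp only [polarCoord_symm_apply, Set.mem_setOf_eq]
        rw [hsq]
        exact h
      rw [Set.indicator_of_notMem hnm1, Set.indicator_of_notMem hnm2, smul_zero]
  rw [setIntegral_congr_fun polarCoord.open_target.measurableSet hpt,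
    setIntegral_indicator ((measurableSet_Ioc).prod measurableSet_Ioo)]
  have hinter : polarCoord.target ∩ (Set.Ioc 0 (Real.sqrt r) ×ˢ Set.Ioo (-π) π)
      = Set.Ioc 0 (Real.sqrt r) ×ˢ Set.Ioo (-π) π := by
    rw [polarCoord_target, Set.prod_inter_prod]
    congr 1
    · exact Set.inter_eq_self_of_subset_right (fun x hx => hx.1)
    · exact Set.inter_self _
  rw [hinter, Measure.volume_eq_prod]
  rw [show (∫ (x : ℝ × ℝ) in Set.Ioc 0 (Real.sqrt r) ×ˢ Set.Ioo (-π) π,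
        x.1 * ((2 * π)⁻¹ * Real.exp (-x.1 ^ 2 / 2)) * 1 ∂(volume.prod volume))
      = (∫ x in Set.Ioc (0:ℝ) (Real.sqrt r), x * ((2 * π)⁻¹ * Real.exp (-x ^ 2 / 2)))
        * (∫ _y in Set.Ioo (-π) π, (1:ℝ)) from
    setIntegral_prod_mul (fun x => x * ((2 * π)⁻¹ * Real.exp (-x ^ 2 / 2))) (fun _ => (1:ℝ)) _ _]
  have h1 : ∫ x in Set.Ioc (0:ℝ) (Real.sqrt r), x * ((2 * π)⁻¹ * Real.exp (-x ^ 2 / 2))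
      = (2 * π)⁻¹ * (1 - Real.exp (-r / 2)) := by
    rw [← intervalIntegral.integral_of_le (Real.sqrt_nonneg r)]
    have hcomm : ∀ x : ℝ, x * ((2 * π)⁻¹ * Real.exp (-x ^ 2 / 2))
        = (2 * π)⁻¹ * (x * Real.exp (-x ^ 2 / 2)) := fun x => by ring
    simp only [hcomm]
    rw [intervalIntegral.integral_const_mul, integral_rho, Real.sq_sqrt hr]
  have h2 : ∫ _x in Set.Ioo (-π) π, (1:ℝ) = 2 * π := by
    simp only [MeasureTheory.setIntegral_const, smul_eq_mul, mul_one, measureReal_def, Real.volume_Ioo]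
    rw [ENNReal.toReal_ofReal (by linarith [Real.pi_pos])]
    ring
  rw [h1, h2]
  have hπ : π ≠ 0 := Real.pi_ne_zero
  field_simp

lemma gauss2_ball {r : ℝ} (hr : 0 ≤ r) :
    (stdGaussian2 {z : Fin 2 → ℝ | (z 0) ^ 2 + (z 1) ^ 2 ≤ r}).toReal
      = 1 - Real.exp (-r / 2) := by
  have hT : MeasurableSet {p : ℝ × ℝ | p.1 ^ 2 + p.2 ^ 2 ≤ r} :=
    measurableSet_le (by fun_prop) measurable_const
  have h1 : stdGaussian2 {z : Fin 2 → ℝ | (z 0) ^ 2 + (z 1) ^ 2 ≤ r}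
      = ((gaussianReal 0 1).prod (gaussianReal 0 1)) {p : ℝ × ℝ | p.1 ^ 2 + p.2 ^ 2 ≤ r} := by
    rw [stdGaussian2,
      ← (measurePreserving_piFinTwo (fun _ => gaussianReal 0 1)).measure_preimage_equiv]
    rfl
  rw [h1, gaussian_prod_eq, withDensity_apply _ hT]
  have hpt : ∀ p : ℝ × ℝ, gaussianPDF 0 1 p.1 * gaussianPDF 0 1 p.2
      = ENNReal.ofReal (gaussianPDFReal 0 1 p.1 * gaussianPDFReal 0 1 p.2) := fun p => by
    rw [gaussianPDF, gaussianPDF, ← ENNReal.ofReal_mul (gaussianPDFReal_nonneg _ _ _)]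
  simp_rw [hpt]
  have hInt : IntegrableOn (fun p : ℝ × ℝ => gaussianPDFReal 0 1 p.1 * gaussianPDFReal 0 1 p.2)
      {p : ℝ × ℝ | p.1 ^ 2 + p.2 ^ 2 ≤ r} volume := by
    apply Integrable.integrableOn
    rw [Measure.volume_eq_prod]
    exact (integrable_gaussianPDFReal 0 1).mul_prod (integrable_gaussianPDFReal 0 1)
  rw [← ofReal_integral_eq_lintegral_ofReal hInt
    (Filter.Eventually.of_forall fun p =>
      mul_nonneg (gaussianPDFReal_nonneg _ _ _) (gaussianPDFReal_nonneg _ _ _)),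
    ENNReal.toReal_ofReal (setIntegral_nonneg hT fun p _ =>
      mul_nonneg (gaussianPDFReal_nonneg _ _ _) (gaussianPDFReal_nonneg _ _ _)),
    integral_disk r hr]

/-- CAPM case, `m = 2`: Let `(Z₁, Z₂)` be standard Gaussian on `ℝ²`, and for
each `t` let `λ_{1,t}, λ_{2,t} ∈ (0,1)` and `c_t ≥ 0` with `λ_{j,t} → 1`,
`(1−λ_{1,t})/(1−λ_{2,t}) → 1`, and `c_t²·√((1−λ_{1,t})(1−λ_{2,t})) → C ∈ (0,∞)`. Then the
type II error `t_{2,t} = P((λ_{1,t}/(1−λ_{1,t})) Z₁² + (λ_{2,t}/(1−λ_{2,t})) Z₂² ≤ c_t²)`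
converges to `1 − e^{−C/2}`. -/
theorem stmt_9 (lam1 lam2 : ℕ → ℝ) (c : ℕ → ℝ) (C : ℝ)
    (hlam1 : ∀ t, lam1 t ∈ Set.Ioo (0 : ℝ) 1) (hlam2 : ∀ t, lam2 t ∈ Set.Ioo (0 : ℝ) 1)
    (hc0 : ∀ t, 0 ≤ c t)
    (hlim1 : Tendsto lam1 atTop (nhds 1)) (hlim2 : Tendsto lam2 atTop (nhds 1))
    (hratio : Tendsto (fun t => (1 - lam1 t) / (1 - lam2 t)) atTop (nhds 1))
    (hC : 0 < C)
    (hcC : Tendsto (fun t => (c t) ^ 2 * Real.sqrt ((1 - lam1 t) * (1 - lam2 t)))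
      atTop (nhds C)) :
    Tendsto (fun t =>
        (stdGaussian2 {z | lam1 t / (1 - lam1 t) * (z 0) ^ 2 +
          lam2 t / (1 - lam2 t) * (z 1) ^ 2 ≤ (c t) ^ 2}).toReal)
      atTop (nhds (1 - Real.exp (-C / 2))) := by
  set α : ℕ → ℝ := fun t => c t ^ 2 * (1 - lam1 t) / lam1 t with hαdef
  set β : ℕ → ℝ := fun t => c t ^ 2 * (1 - lam2 t) / lam2 t with hβdef
  have h1pos : ∀ t, 0 < 1 - lam1 t := fun t => by linarith [(hlam1 t).2]
  have h2pos : ∀ t, 0 < 1 - lam2 t := fun t => by linarith [(hlam2 t).2]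
  have hratio' : Tendsto (fun t => (1 - lam2 t) / (1 - lam1 t)) atTop (nhds 1) := by
    have h := hratio.inv₀ one_ne_zero
    simp only [inv_div, inv_one] at h
    exact h
  have hsr1 : Tendsto (fun t => Real.sqrt ((1 - lam1 t) / (1 - lam2 t))) atTop (nhds 1) := by
    have h := (Real.continuous_sqrt.tendsto 1).comp hratio
    simpa [Function.comp_def] using h
  have hsr2 : Tendsto (fun t => Real.sqrt ((1 - lam2 t) / (1 - lam1 t))) atTop (nhds 1) := by
    have h := (Real.continuous_sqrt.tendsto 1).comp hratio'
    simpa [Function.comp_def] using h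
  have hα : Tendsto α atTop (nhds C) := by
    have h : Tendsto (fun t => c t ^ 2 * Real.sqrt ((1 - lam1 t) * (1 - lam2 t))
          * Real.sqrt ((1 - lam1 t) / (1 - lam2 t)) / lam1 t) atTop (nhds (C * 1 / 1)) :=
      (hcC.mul hsr1).div hlim1 one_ne_zero
    rw [mul_one, div_one] at h
    refine h.congr fun t => ?_
    have e1 : Real.sqrt ((1 - lam1 t) * (1 - lam2 t))
        * Real.sqrt ((1 - lam1 t) / (1 - lam2 t)) = 1 - lam1 t := by
      rw [← Real.sqrt_mul (mul_nonneg (h1pos t).le (h2pos t).le)]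
      rw [show (1 - lam1 t) * (1 - lam2 t) * ((1 - lam1 t) / (1 - lam2 t))
          = (1 - lam1 t) ^ 2 by field_simp [(h2pos t).ne']]
      exact Real.sqrt_sq (h1pos t).le
    rw [mul_assoc, e1]
  have hβ : Tendsto β atTop (nhds C) := by
    have h : Tendsto (fun t => c t ^ 2 * Real.sqrt ((1 - lam1 t) * (1 - lam2 t))
          * Real.sqrt ((1 - lam2 t) / (1 - lam1 t)) / lam2 t) atTop (nhds (C * 1 / 1)) :=
      (hcC.mul hsr2).div hlim2 one_ne_zero
    rw [mul_one, div_one] at h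
    refine h.congr fun t => ?_
    have e1 : Real.sqrt ((1 - lam1 t) * (1 - lam2 t))
        * Real.sqrt ((1 - lam2 t) / (1 - lam1 t)) = 1 - lam2 t := by
      rw [← Real.sqrt_mul (mul_nonneg (h1pos t).le (h2pos t).le)]
      rw [show (1 - lam1 t) * (1 - lam2 t) * ((1 - lam2 t) / (1 - lam1 t))
          = (1 - lam2 t) ^ 2 by field_simp [(h1pos t).ne']]
      exact Real.sqrt_sq (h2pos t).le
    rw [mul_assoc, e1]
  have hcpos : ∀ᶠ t in atTop, 0 < c t ^ 2 := by
    filter_upwards [hcC.eventually (eventually_gt_nhds hC)] with t ht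
    by_contra hc
    push_neg at hc
    have hcz : c t ^ 2 = 0 := le_antisymm hc (sq_nonneg _)
    rw [hcz, zero_mul] at ht
    exact lt_irrefl 0 ht
  have hαpos : ∀ᶠ t in atTop, 0 < α t := by
    filter_upwards [hcpos] with t ht
    have h1 := (hlam1 t).1
    have h2 := h1pos t
    show 0 < c t ^ 2 * (1 - lam1 t) / lam1 t
    exact div_pos (mul_pos ht h2) h1
  have hβpos : ∀ᶠ t in atTop, 0 < β t := by
    filter_upwards [hcpos] with t ht
    have h1 := (hlam2 t).1
    have h2 := h2pos t
    show 0 < c t ^ 2 * (1 - lam2 t) / lam2 t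
    exact div_pos (mul_pos ht h2) h1
  -- key algebraic identities
  have ha : ∀ t, lam1 t / (1 - lam1 t) * α t = c t ^ 2 := fun t => by
    show lam1 t / (1 - lam1 t) * (c t ^ 2 * (1 - lam1 t) / lam1 t) = c t ^ 2
    field_simp [(hlam1 t).1.ne', (h1pos t).ne']
  have hb : ∀ t, lam2 t / (1 - lam2 t) * β t = c t ^ 2 := fun t => by
    show lam2 t / (1 - lam2 t) * (c t ^ 2 * (1 - lam2 t) / lam2 t) = c t ^ 2
    field_simp [(hlam2 t).1.ne', (h2pos t).ne']
  have hapos : ∀ t, 0 < lam1 t / (1 - lam1 t) := fun t => div_pos (hlam1 t).1 (h1pos t)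
  have hbpos : ∀ t, 0 < lam2 t / (1 - lam2 t) := fun t => div_pos (hlam2 t).1 (h2pos t)
  have hlow : ∀ᶠ t in atTop,
      1 - Real.exp (-(min (α t) (β t)) / 2)
        ≤ (stdGaussian2 {z | lam1 t / (1 - lam1 t) * (z 0) ^ 2 +
            lam2 t / (1 - lam2 t) * (z 1) ^ 2 ≤ (c t) ^ 2}).toReal := by
    filter_upwards [hαpos, hβpos] with t hαt hβt
    have hm : 0 ≤ min (α t) (β t) := le_min hαt.le hβt.le
    rw [← gauss2_ball hm]
    refine ENNReal.toReal_mono (measure_ne_top _ _) (measure_mono ?_)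
    intro z hz
    simp only [Set.mem_setOf_eq] at hz ⊢
    set a := lam1 t / (1 - lam1 t) with hadef
    set b := lam2 t / (1 - lam2 t) with hbdef
    have hAt := ha t
    have hBt := hb t
    have hap := hapos t
    have hbp := hbpos t
    rcases le_total (α t) (β t) with hab | hab
    · rw [min_eq_left hab] at hz
      have hba : b ≤ a := by
        have h1 : b * α t ≤ b * β t := mul_le_mul_of_nonneg_left hab hbp.le
        rw [hBt, ← hAt] at h1
        exact le_of_mul_le_mul_right h1 hαt
      nlinarith [sq_nonneg (z 0), sq_nonneg (z 1)]
    · rw [min_eq_right hab] at hz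
      have hba : a ≤ b := by
        have h1 : a * β t ≤ a * α t := mul_le_mul_of_nonneg_left hab hap.le
        rw [hAt, ← hBt] at h1
        exact le_of_mul_le_mul_right h1 hβt
      nlinarith [sq_nonneg (z 0), sq_nonneg (z 1)]
  have hupp : ∀ᶠ t in atTop,
      (stdGaussian2 {z | lam1 t / (1 - lam1 t) * (z 0) ^ 2 +
            lam2 t / (1 - lam2 t) * (z 1) ^ 2 ≤ (c t) ^ 2}).toReal
        ≤ 1 - Real.exp (-(max (α t) (β t)) / 2) := by
    filter_upwards [hαpos, hβpos] with t hαt hβt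
    have hm : 0 ≤ max (α t) (β t) := le_trans hαt.le (le_max_left _ _)
    rw [← gauss2_ball hm]
    refine ENNReal.toReal_mono (measure_ne_top _ _) (measure_mono ?_)
    intro z hz
    simp only [Set.mem_setOf_eq] at hz ⊢
    set a := lam1 t / (1 - lam1 t) with hadef
    set b := lam2 t / (1 - lam2 t) with hbdef
    have hAt := ha t
    have hBt := hb t
    have hap := hapos t
    have hbp := hbpos t
    rcases le_total (α t) (β t) with hab | hab
    · rw [max_eq_right hab]
      have hba : b ≤ a := by
        have h1 : b * α t ≤ b * β t := mul_le_mul_of_nonneg_left hab hbp.le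
        rw [hBt, ← hAt] at h1
        exact le_of_mul_le_mul_right h1 hαt
      nlinarith [sq_nonneg (z 0), sq_nonneg (z 1)]
    · rw [max_eq_left hab]
      have hba : a ≤ b := by
        have h1 : a * β t ≤ a * α t := mul_le_mul_of_nonneg_left hab hap.le
        rw [hAt, ← hBt] at h1
        exact le_of_mul_le_mul_right h1 hβt
      nlinarith [sq_nonneg (z 0), sq_nonneg (z 1)]
  have hmin : Tendsto (fun t => min (α t) (β t)) atTop (nhds C) := by
    have h := hα.min hβ
    simpa using h
  have hmax : Tendsto (fun t => max (α t) (β t)) atTop (nhds C) := by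
    have h := hα.max hβ
    simpa using h
  have hlim_low : Tendsto (fun t => 1 - Real.exp (-(min (α t) (β t)) / 2)) atTop
      (nhds (1 - Real.exp (-C / 2))) :=
    ((Real.continuous_exp.tendsto _).comp ((hmin.neg).div_const 2)).const_sub 1
  have hlim_upp : Tendsto (fun t => 1 - Real.exp (-(max (α t) (β t)) / 2)) atTop
      (nhds (1 - Real.exp (-C / 2))) :=
    ((Real.continuous_exp.tendsto _).comp ((hmax.neg).div_const 2)).const_sub 1
  exact tendsto_of_tendsto_of_tendsto_of_le_of_le' hlim_low hlim_upp hlow hupp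
end
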